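/- Let n and d be positive integers with d ≥ 2. Then the number of ideals (i.e. downward-closed subsets, not necessarily self-complementary) of [n]^d is at most 4^(n^(d−1)). -/

import Mathlib

open Finset

/-- An ideal (downward-closed subset, possibly empty) of a finite poset. -/
def IsIdeal {P : Type*} [PartialOrder P] (I : Finset P) : Prop :=
  ∀ a ∈ I, ∀ b, b ≤ a → b ∈ I

/-- A self-complementary ideal with respect to an involution `φ`. -/
def IsSCIdeal {P : Type*} [PartialOrder P] (φ : P → P) (I : Finset P) : Prop :=
  IsIdeal I ∧ ∀ a, a ∈ I ↔ φ a ∉ I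

/-- The flip graph on self-complementary ideals: two ideals are adjacent when they
differ in exactly one element each way. -/
def FlipGraph {P : Type*} [PartialOrder P] [DecidableEq P] (φ : P → P) :
    SimpleGraph {I : Finset P // IsSCIdeal φ I} where
  Adj I J := I ≠ J ∧ (I.1 \ J.1).card = 1 ∧ (J.1 \ I.1).card = 1
  symm := ⟨fun _ _ h => ⟨h.1.symm, h.2.2, h.2.1⟩⟩
  loopless := ⟨fun _ h => h.1 rfl⟩

/-- Eccentricity of a vertex: its maximum distance to any vertex. -/
noncomputable def eccentricity {V : Type*} (G : SimpleGraph V) (v : V) : ℕ :=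
  ⨆ u, G.dist v u

/-- Diameter of a graph: the maximum eccentricity. -/
noncomputable def graphDiam {V : Type*} (G : SimpleGraph V) : ℕ :=
  ⨆ v, eccentricity G v

/-- Radius of a graph: the minimum eccentricity. -/
noncomputable def graphRadius {V : Type*} (G : SimpleGraph V) : ℕ :=
  ⨅ v, eccentricity G v

/-- The order-reversing involution `aᵢ ↦ ℓᵢ + 1 - aᵢ` on a product of chains
(0-indexed via `Fin.rev`). -/
def chainRev {d : ℕ} (ℓ : Fin d → ℕ) (a : ∀ i, Fin (ℓ i)) : ∀ i, Fin (ℓ i) :=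
  fun i => (a i).rev

lemma mem_iff_lt_card_aux {n : ℕ} (S : Finset (Fin n)) (hS : ∀ a ∈ S, ∀ b, b ≤ a → b ∈ S)
    (j : Fin n) : j ∈ S ↔ j.val < S.card := by
  constructor
  · intro hj
    have h1 : Finset.Iic j ⊆ S := fun b hb => hS j hj b (Finset.mem_Iic.mp hb)
    have := Finset.card_le_card h1
    rw [Fin.card_Iic] at this
    omega
  · intro hj
    by_contra hjS
    have h2 : S ⊆ Finset.Iio j := by
      intro a ha
      rw [Finset.mem_Iio]
      by_contra hja
      exact hjS (hS a ha j (le_of_not_gt hja))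
    have := Finset.card_le_card h2
    rw [Fin.card_Iio] at this
    omega

lemma strictMono_eq_of_image_eq {k : ℕ} {f g : Fin k → ℕ} (hf : StrictMono f) (hg : StrictMono g)
    (h : Finset.image f Finset.univ = Finset.image g Finset.univ) : f = g := by
  have hcard : (Finset.image f Finset.univ).card = k := by
    rw [Finset.card_image_of_injective _ hf.injective, Finset.card_univ, Fintype.card_fin]
  have h1 := Finset.orderEmbOfFin_unique hcard
    (fun x => Finset.mem_image_of_mem f (Finset.mem_univ x)) hf
  have h2 := Finset.orderEmbOfFin_unique hcard
    (fun x => h ▸ Finset.mem_image_of_mem g (Finset.mem_univ x)) hg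
  exact h1.trans h2.symm

lemma strictAnti_eq_of_image_eq {k : ℕ} {f g : Fin k → ℕ} (hf : StrictAnti f) (hg : StrictAnti g)
    (h : Finset.image f Finset.univ = Finset.image g Finset.univ) : f = g := by
  have himg : ∀ p : Fin k → ℕ,
      Finset.image (p ∘ Fin.rev) Finset.univ = Finset.image p Finset.univ := by
    intro p
    rw [← Finset.image_image, Finset.image_univ_of_surjective Fin.rev_surjective]
  have heq := strictMono_eq_of_image_eq (hf.comp (fun a b hab => (Fin.rev_lt_rev).mpr hab))
    (hg.comp (fun a b hab => (Fin.rev_lt_rev).mpr hab)) (by rw [himg, himg, h])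
  funext i
  have := congrFun heq i.rev
  simpa [Fin.rev_rev] using this


/-- For `d ≥ 2`, the number of ideals of `[n]^d` is at most `4^(n^(d-1))`. -/
theorem card_ideals_cube_le (n d : ℕ) (hn : 0 < n) (hd : 2 ≤ d) :
    Nat.card {I : Finset (Fin d → Fin n) // IsIdeal I} ≤ 4 ^ n ^ (d - 1) := by
  classical
  obtain ⟨m, rfl⟩ : ∃ m, d = m + 2 := ⟨d - 2, by omega⟩
  have hd1 : m + 2 - 1 = m + 1 := rfl
  rw [hd1]
  -- the "line count" of an ideal above a base point
  set F : Finset (Fin (m + 2) → Fin n) → (Fin (m + 1) → Fin n) → ℕ :=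
    fun I z => (Finset.univ.filter (fun j : Fin n => Fin.cons j z ∈ I)).card with hF
  have hFle : ∀ I z, F I z ≤ n := by
    intro I z
    calc F I z ≤ (Finset.univ : Finset (Fin n)).card := Finset.card_filter_le _ _
    _ = n := by simp
  have hmem : ∀ I : Finset (Fin (m + 2) → Fin n), IsIdeal I → ∀ (j : Fin n) z,
      Fin.cons j z ∈ I ↔ j.val < F I z := by
    intro I hI j z
    have := mem_iff_lt_card_aux (Finset.univ.filter fun j : Fin n => Fin.cons j z ∈ I) ?_ j
    · simpa [hF] using this
    · intro a ha b hb
      simp only [Finset.mem_filter, Finset.mem_univ, true_and] at ha ⊢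
      refine hI _ ha _ ?_
      intro k
      refine Fin.cases ?_ ?_ k <;> simp [hb]
  have hFanti : ∀ I, IsIdeal I → ∀ {z z' : Fin (m + 1) → Fin n}, z ≤ z' → F I z' ≤ F I z := by
    intro I hI z z' hzz
    apply Finset.card_le_card
    intro j hj
    simp only [Finset.mem_filter, Finset.mem_univ, true_and] at hj ⊢
    refine hI _ hj _ ?_
    intro k
    refine Fin.cases ?_ ?_ k <;> simp [hzz _]
  -- the strictly decreasing encoding along lines in direction 0 of the base
  set A : Finset (Fin (m + 2) → Fin n) → (Fin (m + 1) → Fin n) → Fin n → ℕ :=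
    fun I z i => F I (Function.update z 0 i) + (n - 1 - i.val) with hA
  set E : {I : Finset (Fin (m + 2) → Fin n) // IsIdeal I} → (Fin (m + 1) → Fin n) → Bool × Bool :=
    fun I z => (decide (∃ i : Fin n, A I.1 z i = 2 * (z 0).val),
                decide (∃ i : Fin n, A I.1 z i = 2 * (z 0).val + 1)) with hEdef
  have hinj : Function.Injective E := by
    intro I I' hE
    have hanti : ∀ (J : Finset (Fin (m + 2) → Fin n)), IsIdeal J →
        ∀ z, StrictAnti (A J z) := by
      intro J hJ z i i' hii
      have h1 : F J (Function.update z 0 i') ≤ F J (Function.update z 0 i) := by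
        apply hFanti J hJ
        intro k
        by_cases hk : k = 0
        · subst hk; simp [hii.le]
        · simp [Function.update_of_ne hk]
      have h2 : i.val < i'.val := hii
      have h3 : i'.val < n := i'.2
      simp only [hA]
      omega
    have hFeq : ∀ z, F I.1 z = F I'.1 z := by
      intro z
      have key : ∀ t, t < 2 * n →
          ((∃ i : Fin n, A I.1 z i = t) ↔ (∃ i : Fin n, A I'.1 z i = t)) := by
        intro t ht
        set q : Fin n := ⟨t / 2, by omega⟩ with hq
        have hEz := congrFun hE (Function.update z 0 q)
        have hupd : ∀ (J : Finset (Fin (m + 2) → Fin n)) (i : Fin n),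
            A J (Function.update z 0 q) i = A J z i := by
          intro J i
          simp [hA, Function.update_idem]
        have hz0 : (Function.update z 0 q) 0 = q := by simp
        rw [hEdef, Prod.ext_iff] at hEz
        simp only [hz0] at hEz
        obtain ⟨hEz1, hEz2⟩ := hEz
        rw [decide_eq_decide] at hEz1 hEz2
        simp only [hupd] at hEz1 hEz2
        have hqv : (q : ℕ) = t / 2 := rfl
        have hcase : t = 2 * (q : ℕ) ∨ t = 2 * (q : ℕ) + 1 := by rw [hqv]; omega
        rcases hcase with h | h
        · rw [h]; exact hEz1
        · rw [h]; exact hEz2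
      have himage : Finset.image (A I.1 z) Finset.univ
          = Finset.image (A I'.1 z) Finset.univ := by
        apply Finset.ext
        intro t
        simp only [Finset.mem_image, Finset.mem_univ, true_and]
        constructor
        · rintro ⟨i, rfl⟩
          have hb : A I.1 z i < 2 * n := by
            have h1 := hFle I.1 (Function.update z 0 i)
            have h2 := i.2
            simp only [hA]; omega
          exact (key _ hb).mp ⟨i, rfl⟩
        · rintro ⟨i, rfl⟩
          have hb : A I'.1 z i < 2 * n := by
            have h1 := hFle I'.1 (Function.update z 0 i)
            have h2 := i.2
            simp only [hA]; omega
          exact (key _ hb).mpr ⟨i, rfl⟩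
      have hAeq := strictAnti_eq_of_image_eq (hanti I.1 I.2 z) (hanti I'.1 I'.2 z) himage
      have hcf := congrFun hAeq (z 0)
      simp only [hA] at hcf
      rw [Function.update_eq_self 0 z] at hcf
      omega
    apply Subtype.ext
    apply Finset.ext
    intro x
    have hx : Fin.cons (x 0) (Fin.tail x) = x := Fin.cons_self_tail x
    rw [← hx, hmem I.1 I.2, hmem I'.1 I'.2, hFeq]
  have hcard := Nat.card_le_card_of_injective E hinj
  refine hcard.trans ?_
  rw [Nat.card_eq_fintype_card]
  simp [Fintype.card_fun]
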